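/- arXiv:1102.1101 — 4 statements merged into one kernel-verified Lean document; each statement's English description precedes it below -/
import Mathlib

section
/- Strong duality for the ROF problem: min_v (½‖w − v‖² + λ TV(v)) = ½ max over z ∈ K of (‖w‖² − ‖λ div z + w‖²), where K = {z: Ω → ℝ³ | ‖z(ω)‖ ≤ 1 ∀ω}, and the optimal primal variable is v* = w + λ div z* for any dual optimizer z*. -/
open scoped RealInnerProductSpace

/-- If `0 ≤ a + t * b` for all `t ∈ (0,1]`, then `0 ≤ a`. -/
lemma rof_aux_limit (a b : ℝ) (h : ∀ t : ℝ, 0 < t → t ≤ 1 → 0 ≤ a + t * b) : 0 ≤ a := by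
  rcases le_or_gt b 0 with hb | hb
  · have := h 1 one_pos le_rfl; linarith
  · by_contra ha
    push_neg at ha
    have ht1 : (0:ℝ) < min 1 (-a / (2*b)) := by
      apply lt_min one_pos
      exact div_pos (by linarith) (by linarith)
    have ht2 : min 1 (-a / (2*b)) ≤ 1 := min_le_left _ _
    have := h _ ht1 ht2
    have h3 : min 1 (-a / (2*b)) * b ≤ (-a / (2*b)) * b :=
      mul_le_mul_of_nonneg_right (min_le_right _ _) hb.le
    have h4 : (-a / (2*b)) * b = -a/2 := by field_simp
    linarith

/-- Strong duality for the ROF problem: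
`min_v (½‖w − v‖² + λ TV(v)) = ½ max_{z ∈ K} (‖w‖² − ‖λ div z + w‖²)`,
and the primal optimum is `v* = w + λ div z*` for any dual optimizer `z*`. -/
theorem rof_strong_duality (Ω : Type*) [Fintype Ω]
    (grad : (Ω → ℝ) →ₗ[ℝ] (Ω → EuclideanSpace ℝ (Fin 3)))
    (dvg : (Ω → EuclideanSpace ℝ (Fin 3)) →ₗ[ℝ] (Ω → ℝ))
    (hadj : ∀ (v : Ω → ℝ) (z : Ω → EuclideanSpace ℝ (Fin 3)),
      ∑ ω : Ω, (inner ℝ (grad v ω) (z ω) : ℝ) = - ∑ ω : Ω, v ω * dvg z ω)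
    (lam : ℝ) (hlam : 0 < lam) (w : Ω → ℝ)
    (TV : (Ω → ℝ) → ℝ) (hTV : ∀ v, TV v = ∑ ω : Ω, ‖grad v ω‖)
    (P : (Ω → ℝ) → ℝ)
    (hP : ∀ v, P v = (1 / 2) * ∑ ω : Ω, (w ω - v ω) ^ 2 + lam * TV v)
    (D : (Ω → EuclideanSpace ℝ (Fin 3)) → ℝ)
    (hD : ∀ z, D z = (1 / 2) * (∑ ω : Ω, (w ω) ^ 2 - ∑ ω : Ω, (lam * dvg z ω + w ω) ^ 2)) :
    (∃ zstar : Ω → EuclideanSpace ℝ (Fin 3), (∀ ω, ‖zstar ω‖ ≤ 1) ∧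
      ∀ z, (∀ ω, ‖z ω‖ ≤ 1) → D z ≤ D zstar) ∧
    ∀ zstar : Ω → EuclideanSpace ℝ (Fin 3), (∀ ω, ‖zstar ω‖ ≤ 1) →
      (∀ z, (∀ ω, ‖z ω‖ ≤ 1) → D z ≤ D zstar) →
      (∀ v : Ω → ℝ, P (w + lam • dvg zstar) ≤ P v) ∧
      P (w + lam • dvg zstar) = D zstar := by
  classical
  -- the key Lagrangian identity
  have key : ∀ (v : Ω → ℝ) (z : Ω → EuclideanSpace ℝ (Fin 3)),
      P v - D z = ∑ ω : Ω, ((1/2) * (v ω - w ω - lam * dvg z ω)^2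
        + lam * (‖grad v ω‖ - inner ℝ (grad v ω) (z ω))) := by
    intro v z
    have h2 : ∑ ω : Ω, v ω * dvg z ω = - ∑ ω : Ω, (inner ℝ (grad v ω) (z ω) : ℝ) := by
      linarith [hadj v z]
    rw [hP, hD, hTV]
    have expand : ∀ ω : Ω, (1/2) * (v ω - w ω - lam * dvg z ω)^2
          + lam * (‖grad v ω‖ - inner ℝ (grad v ω) (z ω))
        = ((1/2) * (w ω - v ω)^2 + lam * ‖grad v ω‖ - (1/2) * (w ω)^2
          + (1/2) * (lam * dvg z ω + w ω)^2)
          - lam * (v ω * dvg z ω) - lam * (inner ℝ (grad v ω) (z ω)) := by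
      intro ω; ring
    rw [Finset.sum_congr rfl (fun ω _ => expand ω)]
    simp only [Finset.sum_sub_distrib, Finset.sum_add_distrib, ← Finset.mul_sum, h2]
    ring
  -- weak duality
  have weak : ∀ (v : Ω → ℝ) (z : Ω → EuclideanSpace ℝ (Fin 3)),
      (∀ ω, ‖z ω‖ ≤ 1) → D z ≤ P v := by
    intro v z hz
    have h := key v z
    have hnn : 0 ≤ ∑ ω : Ω, ((1/2) * (v ω - w ω - lam * dvg z ω)^2
        + lam * (‖grad v ω‖ - inner ℝ (grad v ω) (z ω))) := by
      apply Finset.sum_nonneg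
      intro ω _
      have h1 : (0:ℝ) ≤ (1/2) * (v ω - w ω - lam * dvg z ω)^2 := by positivity
      have h2 : (inner ℝ (grad v ω) (z ω) : ℝ) ≤ ‖grad v ω‖ := by
        calc (inner ℝ (grad v ω) (z ω) : ℝ) ≤ ‖grad v ω‖ * ‖z ω‖ := real_inner_le_norm _ _
          _ ≤ ‖grad v ω‖ * 1 := by
              exact mul_le_mul_of_nonneg_left (hz ω) (norm_nonneg _)
          _ = ‖grad v ω‖ := mul_one _
      have h3 : 0 ≤ lam * (‖grad v ω‖ - inner ℝ (grad v ω) (z ω)) := by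
        apply mul_nonneg hlam.le; linarith
      linarith
    linarith
  constructor
  · -- existence of a dual maximizer: D is continuous on the compact set K
    have hKeq : {z : Ω → EuclideanSpace ℝ (Fin 3) | ∀ ω, ‖z ω‖ ≤ 1}
        = Set.pi Set.univ (fun _ : Ω => Metric.closedBall (0 : EuclideanSpace ℝ (Fin 3)) 1) := by
      ext z
      simp [Set.mem_pi, Metric.mem_closedBall, dist_zero_right]
    have hK : IsCompact {z : Ω → EuclideanSpace ℝ (Fin 3) | ∀ ω, ‖z ω‖ ≤ 1} := by
      rw [hKeq]
      exact isCompact_univ_pi (fun _ => isCompact_closedBall 0 1)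
    have hne : ({z : Ω → EuclideanSpace ℝ (Fin 3) | ∀ ω, ‖z ω‖ ≤ 1}).Nonempty := by
      exact ⟨0, fun ω => by simp⟩
    have hdvgc : Continuous (fun z : Ω → EuclideanSpace ℝ (Fin 3) => dvg z) :=
      dvg.continuous_of_finiteDimensional
    have hcont : Continuous D := by
      have hDeq : D = fun z => (1 / 2) * (∑ ω : Ω, (w ω) ^ 2
          - ∑ ω : Ω, (lam * dvg z ω + w ω) ^ 2) := funext hD
      rw [hDeq]
      apply Continuous.mul continuous_const
      apply Continuous.sub continuous_const
      apply continuous_finset_sum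
      intro ω _
      exact (((continuous_const.mul ((continuous_apply ω).comp hdvgc)).add
        continuous_const).pow 2)
    obtain ⟨zstar, hzK, hmax⟩ := hK.exists_isMaxOn hne hcont.continuousOn
    exact ⟨zstar, hzK, fun z hz => hmax hz⟩
  · -- optimality of the primal candidate for any dual maximizer
    intro zstar hzK hmax
    set vstar : Ω → ℝ := w + lam • dvg zstar with hvstar
    have hvs : ∀ ω, vstar ω = w ω + lam * dvg zstar ω := by
      intro ω; simp [hvstar]
    -- variational inequality
    have varineq : ∀ z : Ω → EuclideanSpace ℝ (Fin 3), (∀ ω, ‖z ω‖ ≤ 1) →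
        ∑ ω : Ω, (inner ℝ (grad vstar ω) (z ω) : ℝ)
          ≤ ∑ ω : Ω, (inner ℝ (grad vstar ω) (zstar ω) : ℝ) := by
      intro z hz
      set h : Ω → EuclideanSpace ℝ (Fin 3) := z - zstar with hh
      have hstep : 0 ≤ ∑ ω : Ω, vstar ω * dvg h ω := by
        apply rof_aux_limit _ ((lam / 2) * ∑ ω : Ω, (dvg h ω)^2)
        intro t ht0 ht1
        have hzt : ∀ ω, ‖(zstar + t • h) ω‖ ≤ 1 := by
          intro ω
          have : (zstar + t • h) ω = (1 - t) • zstar ω + t • z ω := by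
            simp [hh]
            module
          rw [this]
          calc ‖(1 - t) • zstar ω + t • z ω‖ ≤ ‖(1 - t) • zstar ω‖ + ‖t • z ω‖ :=
              norm_add_le _ _
            _ = (1 - t) * ‖zstar ω‖ + t * ‖z ω‖ := by
                rw [norm_smul, norm_smul, Real.norm_eq_abs, Real.norm_eq_abs,
                  abs_of_nonneg (by linarith), abs_of_nonneg ht0.le]
            _ ≤ (1 - t) * 1 + t * 1 := by
                have := hzK ω
                have := hz ω
                have h1 : (0:ℝ) ≤ 1 - t := by linarith
                nlinarith
            _ = 1 := by ring
        have hDle := hmax _ hzt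
        rw [hD, hD] at hDle
        have hdvg : ∀ ω, dvg (zstar + t • h) ω = dvg zstar ω + t * dvg h ω := by
          intro ω
          simp [map_add, map_smul]
        have hexp : ∀ ω : Ω, (lam * dvg (zstar + t • h) ω + w ω)^2
            = (lam * dvg zstar ω + w ω)^2
              + 2 * (t * lam) * (vstar ω * dvg h ω)
              + (t * lam)^2 * (dvg h ω)^2 := by
          intro ω
          rw [hdvg ω, hvs ω]
          ring
        rw [Finset.sum_congr rfl (fun ω _ => hexp ω)] at hDle
        simp only [Finset.sum_add_distrib, ← Finset.mul_sum] at hDle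
        have htl : 0 < t * lam := mul_pos ht0 hlam
        have key2 : 0 ≤ 2 * (t * lam) * ∑ ω : Ω, vstar ω * dvg h ω
            + (t * lam)^2 * ∑ ω : Ω, (dvg h ω)^2 := by linarith
        have hfinal : 0 ≤ 2 * (t * lam) * (∑ ω : Ω, vstar ω * dvg h ω
            + t * ((lam / 2) * ∑ ω : Ω, (dvg h ω)^2)) := by
          nlinarith [key2]
        nlinarith [hfinal, htl]
      -- translate via the adjoint relation
      have hadjh := hadj vstar h
      have hsplit : ∑ ω : Ω, (inner ℝ (grad vstar ω) (h ω) : ℝ)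
          = ∑ ω : Ω, (inner ℝ (grad vstar ω) (z ω) : ℝ)
            - ∑ ω : Ω, (inner ℝ (grad vstar ω) (zstar ω) : ℝ) := by
        rw [← Finset.sum_sub_distrib]
        apply Finset.sum_congr rfl
        intro ω _
        have : h ω = z ω - zstar ω := by simp [hh]
        rw [this, inner_sub_right]
      rw [hsplit] at hadjh
      linarith [hstep, hadjh]
    -- equality ∑ ⟨grad v*, z*⟩ = TV v*
    have hTVeq : ∑ ω : Ω, (inner ℝ (grad vstar ω) (zstar ω) : ℝ) = ∑ ω : Ω, ‖grad vstar ω‖ := by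
      -- the test dual variable attaining TV
      set z0 : Ω → EuclideanSpace ℝ (Fin 3) :=
        fun ω => if grad vstar ω = 0 then 0 else ‖grad vstar ω‖⁻¹ • grad vstar ω with hz0
      have hz0K : ∀ ω, ‖z0 ω‖ ≤ 1 := by
        intro ω
        simp only [hz0]
        split_ifs with hg
        · simp
        · rw [norm_smul, Real.norm_eq_abs, abs_of_nonneg (by positivity),
            inv_mul_cancel₀ (norm_ne_zero_iff.mpr hg)]
      have hz0inner : ∀ ω, (inner ℝ (grad vstar ω) (z0 ω) : ℝ) = ‖grad vstar ω‖ := by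
        intro ω
        simp only [hz0]
        split_ifs with hg
        · simp [hg]
        · rw [real_inner_smul_right, real_inner_self_eq_norm_sq]
          have hne : ‖grad vstar ω‖ ≠ 0 := norm_ne_zero_iff.mpr hg
          field_simp
      have h1 : ∑ ω : Ω, ‖grad vstar ω‖ ≤ ∑ ω : Ω, (inner ℝ (grad vstar ω) (zstar ω) : ℝ) := by
        have := varineq z0 hz0K
        rw [Finset.sum_congr rfl (fun ω _ => hz0inner ω)] at this
        exact this
      have h2 : ∑ ω : Ω, (inner ℝ (grad vstar ω) (zstar ω) : ℝ) ≤ ∑ ω : Ω, ‖grad vstar ω‖ := by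
        apply Finset.sum_le_sum
        intro ω _
        calc (inner ℝ (grad vstar ω) (zstar ω) : ℝ) ≤ ‖grad vstar ω‖ * ‖zstar ω‖ :=
            real_inner_le_norm _ _
          _ ≤ ‖grad vstar ω‖ * 1 := mul_le_mul_of_nonneg_left (hzK ω) (norm_nonneg _)
          _ = ‖grad vstar ω‖ := mul_one _
      linarith
    -- strong duality equality
    have hPD : P vstar = D zstar := by
      have h := key vstar zstar
      have hz : ∀ ω : Ω, (1/2) * (vstar ω - w ω - lam * dvg zstar ω)^2
          + lam * (‖grad vstar ω‖ - inner ℝ (grad vstar ω) (zstar ω))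
          = lam * (‖grad vstar ω‖ - inner ℝ (grad vstar ω) (zstar ω)) := by
        intro ω
        rw [hvs ω]
        ring
      rw [Finset.sum_congr rfl (fun ω _ => hz ω), ← Finset.mul_sum,
        Finset.sum_sub_distrib, ← hTVeq] at h
      simp at h
      linarith
    exact ⟨fun v => hPD ▸ weak v zstar hzK, hPD⟩
end

section
/- Weak duality / duality gap nonnegativity for ROF: for any z ∈ K and v = w + λ div z, the quantity δ(v) = ½‖w − v‖² + λ TV(v) − ½(‖w‖² − ‖v‖²) is nonnegative, and δ(v*) = 0 at the optimum v* = prox_{λTV}(w). -/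
/-- Weak duality / nonnegativity of the duality gap for the ROF problem: for any
`z ∈ K` and `v = w + λ div z`, the gap
`δ(v) = ½‖w − v‖² + λ TV(v) − ½(‖w‖² − ‖v‖²)` is nonnegative, and it vanishes at
the optimum `v* = prox_{λTV}(w)`. -/
theorem rof_duality_gap_nonneg (Ω : Type*) [Fintype Ω]
    (grad : (Ω → ℝ) →ₗ[ℝ] (Ω → EuclideanSpace ℝ (Fin 3)))
    (dvg : (Ω → EuclideanSpace ℝ (Fin 3)) →ₗ[ℝ] (Ω → ℝ))
    (hadj : ∀ (v : Ω → ℝ) (z : Ω → EuclideanSpace ℝ (Fin 3)),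
      ∑ ω : Ω, (inner ℝ (grad v ω) (z ω) : ℝ) = - ∑ ω : Ω, v ω * dvg z ω)
    (lam : ℝ) (hlam : 0 < lam) (w : Ω → ℝ)
    (TV : (Ω → ℝ) → ℝ) (hTV : ∀ v, TV v = ∑ ω : Ω, ‖grad v ω‖)
    (δ : (Ω → ℝ) → ℝ)
    (hδ : ∀ v, δ v = (1 / 2) * ∑ ω : Ω, (w ω - v ω) ^ 2 + lam * TV v
      - (1 / 2) * (∑ ω : Ω, (w ω) ^ 2 - ∑ ω : Ω, (v ω) ^ 2)) :
    (∀ z : Ω → EuclideanSpace ℝ (Fin 3), (∀ ω, ‖z ω‖ ≤ 1) →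
      0 ≤ δ (w + lam • dvg z)) ∧
    ∀ vstar : Ω → ℝ,
      (∀ u : Ω → ℝ, (1 / 2) * ∑ ω : Ω, (w ω - vstar ω) ^ 2 + lam * TV vstar
        ≤ (1 / 2) * ∑ ω : Ω, (w ω - u ω) ^ 2 + lam * TV u) →
      δ vstar = 0 := by
  have key : ∀ v : Ω → ℝ, δ v = (∑ ω : Ω, v ω * (v ω - w ω)) + lam * TV v := by
    intro v
    have hsum : ∑ ω : Ω, (w ω - v ω) ^ 2
        = (∑ ω : Ω, (w ω) ^ 2 - ∑ ω : Ω, (v ω) ^ 2)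
          + 2 * ∑ ω : Ω, v ω * (v ω - w ω) := by
      rw [← Finset.sum_sub_distrib, Finset.mul_sum, ← Finset.sum_add_distrib]
      exact Finset.sum_congr rfl fun ω _ => by ring
    rw [hδ v, hsum]; ring
  constructor
  · intro z hz
    set v : Ω → ℝ := w + lam • dvg z with hv
    have hvw : ∀ ω, v ω - w ω = lam * dvg z ω := by
      intro ω; simp [hv]
    have hinner : ∑ ω : Ω, (inner ℝ (grad v ω) (z ω) : ℝ) ≤ TV v := by
      rw [hTV]
      refine Finset.sum_le_sum fun ω _ => ?_
      calc (inner ℝ (grad v ω) (z ω) : ℝ) ≤ ‖grad v ω‖ * ‖z ω‖ := real_inner_le_norm _ _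
        _ ≤ ‖grad v ω‖ * 1 := mul_le_mul_of_nonneg_left (hz ω) (norm_nonneg _)
        _ = ‖grad v ω‖ := mul_one _
    have h2 : ∑ ω : Ω, v ω * dvg z ω = - ∑ ω : Ω, (inner ℝ (grad v ω) (z ω) : ℝ) := by
      linarith [hadj v z]
    have h1 : ∑ ω : Ω, v ω * (v ω - w ω) = lam * ∑ ω : Ω, v ω * dvg z ω := by
      rw [Finset.mul_sum]
      exact Finset.sum_congr rfl fun ω _ => by rw [hvw ω]; ring
    have hδv : δ v = lam * (TV v - ∑ ω : Ω, (inner ℝ (grad v ω) (z ω) : ℝ)) := by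
      rw [key v, h1, h2]; ring
    rw [hδv]
    exact mul_nonneg hlam.le (by linarith)
  · intro v hmin
    set A : ℝ := ∑ ω : Ω, v ω * (v ω - w ω) + lam * TV v with hA
    set B : ℝ := (1 / 2) * ∑ ω : Ω, (v ω) ^ 2 with hB
    have hBnn : 0 ≤ B := by
      rw [hB]
      positivity
    have hquad : ∀ t : ℝ, -1 ≤ t → 0 ≤ t * A + t ^ 2 * B := by
      intro t ht
      have h1t : (0:ℝ) ≤ 1 + t := by linarith
      have hTVsm : TV ((1 + t) • v) = (1 + t) * TV v := by
        rw [hTV, hTV, Finset.mul_sum]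
        refine Finset.sum_congr rfl fun ω _ => ?_
        rw [map_smul]
        simp [norm_smul, abs_of_nonneg h1t]
      have hsum2 : ∑ ω : Ω, (w ω - ((1 + t) • v) ω) ^ 2
          = ∑ ω : Ω, (w ω - v ω) ^ 2
            + 2 * t * ∑ ω : Ω, v ω * (v ω - w ω)
            + t ^ 2 * ∑ ω : Ω, (v ω) ^ 2 := by
        rw [Finset.mul_sum, Finset.mul_sum, ← Finset.sum_add_distrib,
          ← Finset.sum_add_distrib]
        refine Finset.sum_congr rfl fun ω _ => ?_
        simp only [Pi.smul_apply, smul_eq_mul]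
        ring
      have := hmin ((1 + t) • v)
      rw [hTVsm, hsum2] at this
      rw [hA, hB]
      nlinarith [this]
    have hδeq : δ v = A := key v
    rw [hδeq]
    by_contra hAne
    have hApos : 0 < |A| := abs_pos.mpr hAne
    set D : ℝ := 2 * B + |A| + 1 with hD
    have hDpos : 0 < D := by rw [hD]; positivity
    have ht1 : -1 ≤ -A / D := by
      rw [neg_div, neg_le_neg_iff, div_le_one hDpos]
      calc A ≤ |A| := le_abs_self A
        _ ≤ D := by rw [hD]; linarith
    have h := hquad (-A / D) ht1
    have hD2 : 0 < D ^ 2 := by positivity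
    have hexp : (-A / D) * A + (-A / D) ^ 2 * B = A ^ 2 * (B - D) / D ^ 2 := by
      field_simp; ring
    rw [hexp] at h
    have hA2 : 0 < A ^ 2 := by positivity
    have hBD : B - D < 0 := by rw [hD]; linarith
    have h' : 0 ≤ A ^ 2 * (B - D) := by
      have h2 := mul_le_mul_of_nonneg_right h hD2.le
      rwa [zero_mul, div_mul_cancel₀ _ (ne_of_gt hD2)] at h2
    nlinarith [mul_pos hA2 (neg_pos.mpr hBD)]
end

section
/- For any z ∈ K and v = w + λ div z, one has ½‖w − v‖² + λ TV(v) ≥ ½(‖w‖² − ‖v‖²); hence if the duality gap δ(v) ≤ ε then v is an ε-optimal solution of the ROF problem: ½‖w−v‖² + λTV(v) ≤ min_u (½‖w−u‖² + λTV(u)) + ε. -/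
/-- For any `z ∈ K` and `v = w + λ div z`, one has
`½‖w − v‖² + λ TV(v) ≥ ½(‖w‖² − ‖v‖²)`; hence if the duality gap
`δ(v) = ½‖w−v‖² + λTV(v) − ½(‖w‖² − ‖v‖²)` is at most `ε`, then `v` is an
`ε`-optimal solution of the ROF problem. -/
theorem rof_eps_optimality (Ω : Type*) [Fintype Ω]
    (grad : (Ω → ℝ) →ₗ[ℝ] (Ω → EuclideanSpace ℝ (Fin 3)))
    (dvg : (Ω → EuclideanSpace ℝ (Fin 3)) →ₗ[ℝ] (Ω → ℝ))
    (hadj : ∀ (v : Ω → ℝ) (z : Ω → EuclideanSpace ℝ (Fin 3)),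
      ∑ ω : Ω, (inner ℝ (grad v ω) (z ω) : ℝ) = - ∑ ω : Ω, v ω * dvg z ω)
    (lam : ℝ) (hlam : 0 < lam) (ε : ℝ) (hε : 0 < ε) (w : Ω → ℝ)
    (TV : (Ω → ℝ) → ℝ) (hTV : ∀ v, TV v = ∑ ω : Ω, ‖grad v ω‖)
    (P : (Ω → ℝ) → ℝ)
    (hP : ∀ v, P v = (1 / 2) * ∑ ω : Ω, (w ω - v ω) ^ 2 + lam * TV v)
    (z : Ω → EuclideanSpace ℝ (Fin 3)) (hz : ∀ ω, ‖z ω‖ ≤ 1)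
    (v : Ω → ℝ) (hv : v = w + lam • dvg z) :
    (1 / 2) * (∑ ω : Ω, (w ω) ^ 2 - ∑ ω : Ω, (v ω) ^ 2) ≤ P v ∧
    (P v - (1 / 2) * (∑ ω : Ω, (w ω) ^ 2 - ∑ ω : Ω, (v ω) ^ 2) ≤ ε →
      ∀ u : Ω → ℝ, P v ≤ P u + ε) := by
  have h3 : ∀ ω, v ω = w ω + lam * dvg z ω := by
    intro ω; rw [hv]; simp
  have key : ∀ u : Ω → ℝ,
      (1 / 2) * (∑ ω : Ω, (w ω) ^ 2 - ∑ ω : Ω, (v ω) ^ 2) ≤ P u := by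
    intro u
    rw [hP u, hTV]
    -- dual pairing bound
    have h1 : ∀ ω, (inner ℝ (grad u ω) (z ω) : ℝ) ≤ ‖grad u ω‖ := by
      intro ω
      have := real_inner_le_norm (grad u ω) (z ω)
      nlinarith [hz ω, norm_nonneg (grad u ω)]
    have hA : - ∑ ω : Ω, u ω * dvg z ω ≤ ∑ ω : Ω, ‖grad u ω‖ := by
      rw [← hadj u z]
      exact Finset.sum_le_sum fun ω _ => h1 ω
    have hB : - ∑ ω : Ω, u ω * (v ω - w ω) ≤ lam * ∑ ω : Ω, ‖grad u ω‖ := by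
      have hmul := mul_le_mul_of_nonneg_left hA hlam.le
      have hEq : ∑ ω : Ω, u ω * (v ω - w ω)
          = lam * ∑ ω : Ω, u ω * dvg z ω := by
        rw [Finset.mul_sum]
        refine Finset.sum_congr rfl fun ω _ => ?_
        rw [h3 ω]; ring
      calc - ∑ ω : Ω, u ω * (v ω - w ω)
          = lam * (- ∑ ω : Ω, u ω * dvg z ω) := by rw [hEq]; ring
        _ ≤ lam * ∑ ω : Ω, ‖grad u ω‖ := hmul
    -- quadratic identity
    have hid : ∑ ω : Ω, (w ω - u ω) ^ 2
        = ∑ ω : Ω, (w ω) ^ 2 - ∑ ω : Ω, (v ω) ^ 2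
          + 2 * ∑ ω : Ω, u ω * (v ω - w ω)
          + ∑ ω : Ω, (u ω - v ω) ^ 2 := by
      rw [← Finset.sum_sub_distrib, Finset.mul_sum, ← Finset.sum_add_distrib,
        ← Finset.sum_add_distrib]
      refine Finset.sum_congr rfl fun ω _ => ?_
      ring
    have hnn : (0:ℝ) ≤ ∑ ω : Ω, (u ω - v ω) ^ 2 :=
      Finset.sum_nonneg fun ω _ => sq_nonneg _
    linarith
  refine ⟨key v, fun hgap u => ?_⟩
  have := key u
  linarith
end

section
/- ISTA O(1/k) convergence rate: for F(w) = L(w) + λJ(w) with L convex differentiable having L-Lipschitz gradient, J proper convex lsc, and a minimizer w* of F, the ISTA iterates satisfy F(w⁽ᵏ⁾) − F(w*) ≤ L‖w⁽⁰⁾ − w*‖²/(2k) for all k ≥ 1. -/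
section IstaAux

variable {E : Type*} [NormedAddCommGroup E] [InnerProductSpace ℝ E] [CompleteSpace E]

/-- Derivative of `L` along a line, from the gradient. -/
lemma ista_line_hasDerivAt {L : E → ℝ} {G : E → E} (hG : ∀ x, HasGradientAt L (G x) x)
    (w d : E) (t : ℝ) :
    HasDerivAt (fun s : ℝ => L (w + s • d)) (@inner ℝ _ _ (G (w + t • d)) d) t := by
  have hline : HasDerivAt (fun s : ℝ => w + s • d) d t := by
    simpa using ((hasDerivAt_id t).smul_const d).const_add w
  have h := (hG (w + t • d)).hasFDerivAt.comp_hasDerivAt t hline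
  simp [InnerProductSpace.toDual_apply_apply] at h
  exact h

/-- Gradient inequality for convex functions. -/
lemma ista_convex_grad_ineq {L : E → ℝ} (hconv : ConvexOn ℝ Set.univ L)
    {G : E → E} (hG : ∀ x, HasGradientAt L (G x) x) (w u : E) :
    L w + @inner ℝ _ _ (G w) (u - w) ≤ L u := by
  set d := u - w with hd
  set φ : ℝ → ℝ := fun s => L (w + s • d) with hφ
  have hder : HasDerivAt φ (@inner ℝ _ _ (G w) d) 0 := by
    simpa using ista_line_hasDerivAt hG w d 0
  have htend : Filter.Tendsto (slope φ 0) (nhdsWithin 0 (Set.Ioi 0))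
      (nhds (@inner ℝ _ _ (G w) d)) := by
    have := hasDerivAt_iff_tendsto_slope.mp hder
    exact this.mono_left (nhdsWithin_mono 0 (fun x hx => ne_of_gt hx))
  have hev : ∀ᶠ t in nhdsWithin (0:ℝ) (Set.Ioi 0), slope φ 0 t ≤ L u - L w := by
    filter_upwards [Ioc_mem_nhdsGT one_pos] with t ht
    have hcomb : φ t ≤ (1 - t) * L w + t * L u := by
      have hmem := hconv.2 (Set.mem_univ w) (Set.mem_univ u)
        (by linarith [ht.2] : (0:ℝ) ≤ 1 - t) ht.1.le (by ring)
      have : (1 - t) • w + t • u = w + t • d := by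
        rw [hd]; module
      rw [this] at hmem
      simpa [φ, smul_eq_mul] using hmem
    have hφ0 : φ 0 = L w := by simp [φ]
    rw [slope_def_field, sub_zero, div_le_iff₀ ht.1, hφ0]
    nlinarith [hcomb]
  have := le_of_tendsto htend hev
  linarith [this]

/-- Descent lemma for functions with Lipschitz gradient. -/
lemma ista_descent {L : E → ℝ} {G : E → E} (hG : ∀ x, HasGradientAt L (G x) x)
    {c : ℝ} (hLip : ∀ u v, ‖G u - G v‖ ≤ c * ‖u - v‖) (w u : E) :
    L u ≤ L w + @inner ℝ _ _ (G w) (u - w) + c / 2 * ‖u - w‖ ^ 2 := by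
  set d := u - w with hd
  set g : ℝ → ℝ := fun t => L (w + t • d) - t * @inner ℝ _ _ (G w) d - c * t ^ 2 / 2 * ‖d‖ ^ 2
    with hg
  have hder : ∀ t : ℝ, HasDerivAt g
      (@inner ℝ _ _ (G (w + t • d)) d - @inner ℝ _ _ (G w) d - c * t * ‖d‖ ^ 2) t := by
    intro t
    have h1 := ista_line_hasDerivAt hG w d t
    have h2 : HasDerivAt (fun s : ℝ => s * @inner ℝ _ _ (G w) d) (@inner ℝ _ _ (G w) d) t := by
      simpa using (hasDerivAt_id t).mul_const (@inner ℝ _ _ (G w) d)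
    have h3 : HasDerivAt (fun s : ℝ => c * s ^ 2 / 2 * ‖d‖ ^ 2) (c * t * ‖d‖ ^ 2) t := by
      have : HasDerivAt (fun s : ℝ => s ^ 2) (2 * t) t := by
        simpa using hasDerivAt_pow 2 t
      have := ((this.const_mul c).div_const 2).mul_const (‖d‖ ^ 2)
      exact this.congr_deriv (by ring)
    exact (h1.sub h2).sub h3
  have hanti : AntitoneOn g (Set.Icc 0 1) := by
    apply antitoneOn_of_deriv_nonpos (convex_Icc 0 1)
    · exact fun t _ => ((hder t).differentiableAt).continuousAt.continuousWithinAt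
    · exact fun t _ => ((hder t).differentiableAt).differentiableWithinAt
    · intro t ht
      rw [interior_Icc] at ht
      rw [(hder t).deriv]
      have h1 : @inner ℝ _ _ (G (w + t • d) - G w) d ≤ ‖G (w + t • d) - G w‖ * ‖d‖ :=
        real_inner_le_norm _ _
      have h2 : ‖G (w + t • d) - G w‖ ≤ c * (t * ‖d‖) := by
        have := hLip (w + t • d) w
        simpa [norm_smul, abs_of_pos ht.1] using this
      have h3 : @inner ℝ _ _ (G (w + t • d)) d - @inner ℝ _ _ (G w) d
          = @inner ℝ _ _ (G (w + t • d) - G w) d := by rw [inner_sub_left]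
      rw [h3]
      nlinarith [norm_nonneg d, norm_nonneg (G (w + t • d) - G w), ht.1.le]
  have := hanti (Set.left_mem_Icc.2 zero_le_one) (Set.right_mem_Icc.2 zero_le_one) zero_le_one
  have hg0 : g 0 = L w := by simp [g]
  have hg1 : g 1 = L u - @inner ℝ _ _ (G w) d - c / 2 * ‖d‖ ^ 2 := by
    have : w + d = u := by rw [hd]; abel
    simp only [g, one_smul, one_pow, mul_one, this]
    ring
  rw [hg0, hg1] at this
  linarith

end IstaAux

section IstaProx

variable {E : Type*} [NormedAddCommGroup E] [InnerProductSpace ℝ E]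

/-- Variational inequality for the prox step. -/
lemma ista_prox_var_ineq {J : E → ℝ} (hJ : ConvexOn ℝ Set.univ J) {μ : ℝ} (hμ : 0 ≤ μ)
    (z y : E)
    (hmin : ∀ u, 1 / 2 * ‖y - z‖ ^ 2 + μ * J y ≤ 1 / 2 * ‖u - z‖ ^ 2 + μ * J u) (u : E) :
    0 ≤ @inner ℝ _ _ (y - z) (u - y) + μ * (J u - J y) := by
  set a := y - z with ha
  set b := u - y with hb
  set e := @inner ℝ _ _ a b + μ * (J u - J y) with he
  have key : ∀ t : ℝ, t ∈ Set.Ioc (0:ℝ) 1 → -(t / 2) * ‖b‖ ^ 2 ≤ e := by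
    intro t ht
    have hmem := hmin (y + t • b)
    have hexp : ‖y + t • b - z‖ ^ 2
        = ‖a‖ ^ 2 + 2 * t * @inner ℝ _ _ a b + t ^ 2 * ‖b‖ ^ 2 := by
      have : y + t • b - z = a + t • b := by rw [ha]; abel
      rw [this, @norm_add_sq_real, real_inner_smul_right, norm_smul]
      simp [abs_of_pos ht.1, mul_pow]
      ring
    have hJle : J (y + t • b) ≤ (1 - t) * J y + t * J u := by
      have hmem2 := hJ.2 (Set.mem_univ y) (Set.mem_univ u)
        (by linarith [ht.2] : (0:ℝ) ≤ 1 - t) ht.1.le (by ring)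
      have heq : (1 - t) • y + t • u = y + t • b := by rw [hb]; module
      rw [heq] at hmem2
      simpa [smul_eq_mul] using hmem2
    have h1 : 1 / 2 * ‖a‖ ^ 2 + μ * J y
        ≤ 1 / 2 * (‖a‖ ^ 2 + 2 * t * @inner ℝ _ _ a b + t ^ 2 * ‖b‖ ^ 2)
          + μ * ((1 - t) * J y + t * J u) := by
      calc 1 / 2 * ‖a‖ ^ 2 + μ * J y ≤ 1 / 2 * ‖y + t • b - z‖ ^ 2 + μ * J (y + t • b) := hmem
        _ ≤ _ := by rw [hexp]; nlinarith [mul_le_mul_of_nonneg_left hJle hμ]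
    have h2 : 0 ≤ t * e + t ^ 2 / 2 * ‖b‖ ^ 2 := by rw [he]; nlinarith [h1]
    nlinarith [h2, ht.1, mul_pos ht.1 ht.1]
  by_contra hneg
  push_neg at hneg
  rcases eq_or_lt_of_le (sq_nonneg ‖b‖) with hb0 | hbpos
  · have := key 1 (by norm_num)
    rw [← hb0] at this
    linarith
  · set t := min 1 (-e / ‖b‖ ^ 2) with htdef
    have htpos : 0 < t := lt_min one_pos (div_pos (by linarith) hbpos)
    have ht1 : t ≤ 1 := min_le_left _ _
    have hkey := key t ⟨htpos, ht1⟩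
    have ht2 : t * ‖b‖ ^ 2 ≤ -e := by
      have h : t ≤ -e / ‖b‖ ^ 2 := min_le_right _ _
      calc t * ‖b‖ ^ 2 ≤ (-e / ‖b‖ ^ 2) * ‖b‖ ^ 2 :=
            mul_le_mul_of_nonneg_right h (sq_nonneg _)
        _ = -e := by
          have hb1 : ‖b‖ ≠ 0 := fun h0 => by simp [h0] at hbpos
          field_simp
    linarith

end IstaProx

/-- ISTA `O(1/k)` convergence rate: for `F = L + λJ` with `L` convex
differentiable with `c`-Lipschitz gradient, `J` convex lsc, and a minimizer `w*`
of `F`, the ISTA iterates satisfy `F(w⁽ᵏ⁾) − F(w*) ≤ c‖w⁽⁰⁾ − w*‖²/(2k)`. -/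
theorem ista_convergence_rate (p : ℕ)
    (L : EuclideanSpace ℝ (Fin p) → ℝ) (hLconv : ConvexOn ℝ Set.univ L)
    (G : EuclideanSpace ℝ (Fin p) → EuclideanSpace ℝ (Fin p))
    (hG : ∀ w, HasGradientAt L (G w) w)
    (c : ℝ) (hc : 0 < c) (hLip : ∀ u v, ‖G u - G v‖ ≤ c * ‖u - v‖)
    (J : EuclideanSpace ℝ (Fin p) → ℝ) (hJconv : ConvexOn ℝ Set.univ J)
    (hJlsc : LowerSemicontinuous J)
    (lam : ℝ) (hlam : 0 ≤ lam)
    (F : EuclideanSpace ℝ (Fin p) → ℝ) (hF : ∀ u, F u = L u + lam * J u)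
    (wstar : EuclideanSpace ℝ (Fin p)) (hmin : ∀ u, F wstar ≤ F u)
    (w : ℕ → EuclideanSpace ℝ (Fin p))
    (hstep : ∀ k : ℕ, ∀ u,
      1 / 2 * ‖w (k + 1) - (w k - (1 / c) • G (w k))‖ ^ 2 + (lam / c) * J (w (k + 1))
        ≤ 1 / 2 * ‖u - (w k - (1 / c) • G (w k))‖ ^ 2 + (lam / c) * J u) :
    ∀ k : ℕ, 1 ≤ k → F (w k) - F wstar ≤ c * ‖w 0 - wstar‖ ^ 2 / (2 * k) := by
  -- key per-step inequality
  have hstep' : ∀ (k : ℕ) (u : EuclideanSpace ℝ (Fin p)),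
      F (w (k + 1)) ≤ F u + c / 2 * (‖u - w k‖ ^ 2 - ‖u - w (k + 1)‖ ^ 2) := by
    intro k u
    set x := w k with hx
    set y := w (k + 1) with hy
    have hA := ista_prox_var_ineq hJconv (div_nonneg hlam hc.le)
      (x - (1 / c) • G x) y (hstep k) u
    have hsplit : y - (x - (1 / c) • G x) = (y - x) + (1 / c) • G x := by abel
    rw [hsplit, inner_add_left, real_inner_smul_left] at hA
    set i1 := @inner ℝ _ _ (y - x) (u - y) with hi1
    set i2 := @inner ℝ _ _ (G x) (u - y) with hi2
    -- multiply hA by c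
    have hA' : 0 ≤ c * i1 + i2 + lam * (J u - J y) := by
      have h := mul_le_mul_of_nonneg_left hA hc.le
      rw [mul_zero] at h
      have heq : c * (i1 + 1 / c * i2 + lam / c * (J u - J y))
          = c * i1 + i2 + lam * (J u - J y) := by
        field_simp
        try ring
      rw [heq] at h
      exact h
    have hB := ista_descent hG hLip x y
    have hC := ista_convex_grad_ineq hLconv hG x u
    have hid : ‖u - x‖ ^ 2 = ‖u - y‖ ^ 2 + 2 * @inner ℝ _ _ (u - y) (y - x)
        + ‖y - x‖ ^ 2 := by
      have : u - x = (u - y) + (y - x) := by abel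
      rw [this, @norm_add_sq_real]
    have hcomm : @inner ℝ _ _ (y - x) (u - y) = @inner ℝ _ _ (u - y) (y - x) :=
      real_inner_comm _ _
    have hGsplit : @inner ℝ _ _ (G x) (u - y)
        = @inner ℝ _ _ (G x) (u - x) - @inner ℝ _ _ (G x) (y - x) := by
      have : u - y = (u - x) - (y - x) := by abel
      rw [this, inner_sub_right]
    rw [hi2, hGsplit, hi1, hcomm] at hA'
    have hid' : c / 2 * (‖u - x‖ ^ 2 - ‖u - y‖ ^ 2)
        = c * @inner ℝ _ _ (u - y) (y - x) + c / 2 * ‖y - x‖ ^ 2 := by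
      rw [hid]; ring
    rw [hF y, hF u]
    linarith [hA', hB, hC, hid']
  have hmono : ∀ i j : ℕ, i ≤ j → F (w j) ≤ F (w i) := by
    intro i j hij
    induction j, hij using Nat.le_induction with
    | base => exact le_rfl
    | succ n hn ih =>
      have h := hstep' n (w n)
      simp only [sub_self, norm_zero] at h
      nlinarith [mul_nonneg hc.le (sq_nonneg ‖w n - w (n + 1)‖), h, ih]
  have htel : ∀ n : ℕ, ∑ i ∈ Finset.range n, (F (w (i + 1)) - F wstar)
      ≤ c / 2 * (‖wstar - w 0‖ ^ 2 - ‖wstar - w n‖ ^ 2) := by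
    intro n
    induction n with
    | zero => simp
    | succ n ih =>
      rw [Finset.sum_range_succ]
      have := hstep' n wstar
      linarith
  intro k hk
  have hkpos : (0:ℝ) < (k:ℝ) := by exact_mod_cast Nat.lt_of_lt_of_le Nat.zero_lt_one hk
  have hsum : (k:ℝ) * (F (w k) - F wstar) ≤ ∑ i ∈ Finset.range k, (F (w (i + 1)) - F wstar) := by
    have hterm : ∀ i ∈ Finset.range k, F (w k) - F wstar ≤ F (w (i + 1)) - F wstar := by
      intro i hi
      have := hmono (i + 1) k (Finset.mem_range.mp hi)
      linarith
    have := Finset.card_nsmul_le_sum (Finset.range k)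
      (fun i => F (w (i + 1)) - F wstar) (F (w k) - F wstar) hterm
    simpa [Finset.card_range, nsmul_eq_mul] using this
  have hbound : ∑ i ∈ Finset.range k, (F (w (i + 1)) - F wstar)
      ≤ c / 2 * ‖w 0 - wstar‖ ^ 2 := by
    have := htel k
    rw [norm_sub_rev wstar (w 0)] at this
    nlinarith [sq_nonneg ‖wstar - w k‖, this, hc]
  rw [le_div_iff₀ (by positivity : (0:ℝ) < 2 * (k:ℝ))]
  nlinarith [hsum, hbound]
end
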